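/- Let M be a locally compact Hausdorff space, let μ and μ' be finite regular Borel measures on M, let H be a separable complex Hilbert space, and let q, q' : M → B(H) be maps, continuous for the weak operator topology, whose values are rank-one orthogonal projections, and which are weakly overcomplete with respect to μ and μ' respectively. If for every compactly supported continuous function f : M → ℂ and all v, w ∈ H one has ∫_M f(x)⟨v, q(x)w⟩ dμ(x) = ∫_M f(x)⟨v, q'(x)w⟩ dμ'(x), then μ = μ' and q(x) = q'(x) for μ-almost every x ∈ M. -/

import Mathlib

open MeasureTheory
open scoped InnerProductSpace ENNReal NNReal

section Aux

variable {M : Type*} [TopologicalSpace M] [MeasurableSpace M] [BorelSpace M]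
variable {H : Type*} [NormedAddCommGroup H] [InnerProductSpace ℂ H] [CompleteSpace H]

lemma aux_inner_eq {ι : Type*} (b : HilbertBasis ι ℂ H) {T : H →L[ℂ] H} {u : H}
    (hT : ∀ v, T v = ⟪u, v⟫_ℂ • u) (i : ι) :
    ⟪b i, T (b i)⟫_ℂ = ((Complex.normSq ⟪u, b i⟫_ℂ : ℝ) : ℂ) := by
  rw [hT (b i), inner_smul_right, ← inner_conj_symm (b i) u, Complex.mul_conj]

/-- Pointwise trace identity for a rank-one projection. -/
lemma aux_hasSum_one {ι : Type*} (b : HilbertBasis ι ℂ H) {T : H →L[ℂ] H} {u : H}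
    (hu : ‖u‖ = 1) (hT : ∀ v, T v = ⟪u, v⟫_ℂ • u) :
    HasSum (fun i : ι => ⟪b i, T (b i)⟫_ℂ) 1 := by
  have h1 : HasSum (fun i : ι => ⟪u, b i⟫_ℂ * ⟪b i, u⟫_ℂ) 1 := by
    simpa [inner_self_eq_norm_sq_to_K, hu] using b.hasSum_inner_mul_inner u u
  convert h1 using 2 with i
  rw [hT (b i), inner_smul_right]

lemma aux_norm_eq_re {ι : Type*} (b : HilbertBasis ι ℂ H) {T : H →L[ℂ] H} {u : H}
    (hT : ∀ v, T v = ⟪u, v⟫_ℂ • u) (i : ι) :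
    ‖⟪b i, T (b i)⟫_ℂ‖ = (⟪b i, T (b i)⟫_ℂ).re := by
  rw [aux_inner_eq b hT i, Complex.norm_real, Complex.ofReal_re, Real.norm_eq_abs,
    abs_of_nonneg (Complex.normSq_nonneg _)]

lemma aux_hasSum_integral {ι : Type*} [Countable ι] (b : HilbertBasis ι ℂ H)
    (ν : Measure M) [IsFiniteMeasure ν]
    (Q : M → (H →L[ℂ] H))
    (hc : ∀ v w : H, Continuous fun x => ⟪v, Q x w⟫_ℂ)
    (hr : ∀ x, ∃ u : H, ‖u‖ = 1 ∧ ∀ v, Q x v = ⟪u, v⟫_ℂ • u)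
    (f : M → ℂ) (hf : Continuous f) (hfc : HasCompactSupport f) :
    HasSum (fun i : ι => ∫ x, f x * ⟪b i, Q x (b i)⟫_ℂ ∂ν) (∫ x, f x ∂ν) := by
  have hpt : ∀ x : M, HasSum (fun i : ι => ⟪b i, Q x (b i)⟫_ℂ) 1 := by
    intro x; obtain ⟨u, hu1, hu⟩ := hr x; exact aux_hasSum_one b hu1 hu
  have hnn : ∀ (x : M) (i : ι), ‖⟪b i, Q x (b i)⟫_ℂ‖ = (⟪b i, Q x (b i)⟫_ℂ).re := by
    intro x i; obtain ⟨u, hu1, hu⟩ := hr x; exact aux_norm_eq_re b hu i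
  have hre : ∀ x : M, HasSum (fun i : ι => (⟪b i, Q x (b i)⟫_ℂ).re) 1 := by
    intro x
    simpa using (hpt x).mapL Complex.reCLM
  refine hasSum_integral_of_dominated_convergence
    (fun i x => ‖f x‖ * (⟪b i, Q x (b i)⟫_ℂ).re) ?_ ?_ ?_ ?_ ?_
  · exact fun i => ((hf.mul (hc (b i) (b i)))).aestronglyMeasurable
  · intro i
    filter_upwards with x
    rw [norm_mul, hnn x i]
  · filter_upwards with x
    exact (hre x).summable.mul_left _
  · have : (fun x => ∑' i : ι, ‖f x‖ * (⟪b i, Q x (b i)⟫_ℂ).re) = fun x => ‖f x‖ := by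
      funext x
      rw [tsum_mul_left, (hre x).tsum_eq, mul_one]
    rw [this]
    exact (hf.norm).integrable_of_hasCompactSupport hfc.norm
  · filter_upwards with x
    simpa using (hpt x).mul_left (f x)

end Aux

section MeasAux

variable {M : Type*} [TopologicalSpace M] [LocallyCompactSpace M] [T2Space M]
  [MeasurableSpace M] [BorelSpace M]

lemma aux_integral_ofReal {ν : Measure M} {f : M → ℝ} (hint : Integrable f ν) :
    ∫ x, ((f x : ℝ) : ℂ) ∂ν = ((∫ x, f x ∂ν : ℝ) : ℂ) := by
  simpa using Complex.ofRealCLM.integral_comp_comm hint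

lemma aux_compact_le (μ μ' : Measure M) [IsFiniteMeasure μ] [IsFiniteMeasure μ']
    [μ.Regular] [μ'.Regular]
    (hR : ∀ f : M → ℝ, Continuous f → HasCompactSupport f → ∫ x, f x ∂μ = ∫ x, f x ∂μ')
    {K : Set M} (hK : IsCompact K) : μ K ≤ μ' K := by
  refine ENNReal.le_of_forall_pos_le_add fun ε hε _ => ?_
  have hε' : (ε : ℝ≥0∞) ≠ 0 := by exact_mod_cast hε.ne'
  obtain ⟨U, hKU, hUopen, hU⟩ :=
    Set.exists_isOpen_lt_add (μ := μ') (ε := (ε : ℝ≥0∞)) K (measure_ne_top μ' K) hε'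
  obtain ⟨f, hf1, hf0, hfc, hf01⟩ :=
    exists_continuous_one_zero_of_isCompact hK hUopen.isClosed_compl
      (disjoint_compl_right_iff.mpr hKU)
  have hfint : Integrable f μ := f.continuous.integrable_of_hasCompactSupport hfc
  have hfint' : Integrable f μ' := f.continuous.integrable_of_hasCompactSupport hfc
  have h1 : (μ K).toReal ≤ ∫ x, f x ∂μ := by
    have : ∫ x, K.indicator (fun _ => (1 : ℝ)) x ∂μ ≤ ∫ x, f x ∂μ := by
      refine integral_mono ((integrable_const (1 : ℝ)).indicator hK.measurableSet) hfint ?_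
      intro x
      by_cases hx : x ∈ K
      · rw [Set.indicator_of_mem hx]
        have h1x : f x = 1 := hf1 hx
        linarith
      · rw [Set.indicator_of_notMem hx]
        exact (hf01 x).1
    simpa [integral_indicator_const, hK.measurableSet, measureReal_def] using this
  have h2 : ∫ x, f x ∂μ' ≤ (μ' U).toReal := by
    have : ∫ x, f x ∂μ' ≤ ∫ x, U.indicator (fun _ => (1 : ℝ)) x ∂μ' := by
      refine integral_mono hfint' ((integrable_const (1 : ℝ)).indicator hUopen.measurableSet) ?_
      intro x
      by_cases hx : x ∈ U
      · rw [Set.indicator_of_mem hx]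
        exact (hf01 x).2
      · rw [Set.indicator_of_notMem hx]
        have h0x : f x = 0 := hf0 hx
        linarith
    simpa [integral_indicator_const, hUopen.measurableSet, measureReal_def] using this
  have hμK : μ K ≤ μ' U := by
    have hle := (h1.trans ((hR f f.continuous hfc).le)).trans h2
    rw [← ENNReal.ofReal_toReal (measure_ne_top μ K), ← ENNReal.ofReal_toReal (measure_ne_top μ' U)]
    exact ENNReal.ofReal_le_ofReal hle
  exact hμK.trans hU.le

lemma aux_measure_ext (μ μ' : Measure M) [IsFiniteMeasure μ] [IsFiniteMeasure μ']
    [μ.Regular] [μ'.Regular]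
    (h : ∀ f : M → ℂ, Continuous f → HasCompactSupport f → ∫ x, f x ∂μ = ∫ x, f x ∂μ') :
    μ = μ' := by
  have hR : ∀ f : M → ℝ, Continuous f → HasCompactSupport f →
      ∫ x, f x ∂μ = ∫ x, f x ∂μ' := by
    intro f hf hfc
    have hint : Integrable f μ := hf.integrable_of_hasCompactSupport hfc
    have hint' : Integrable f μ' := hf.integrable_of_hasCompactSupport hfc
    have hh := h (fun x => ((f x : ℝ) : ℂ)) (Complex.continuous_ofReal.comp hf)
      (hfc.comp_left (g := (Complex.ofReal : ℝ → ℂ)) rfl)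
    rw [aux_integral_ofReal hint, aux_integral_ofReal hint'] at hh
    exact_mod_cast hh
  have hR' : ∀ f : M → ℝ, Continuous f → HasCompactSupport f →
      ∫ x, f x ∂μ' = ∫ x, f x ∂μ := fun f hf hfc => (hR f hf hfc).symm
  have hK : ∀ K : Set M, IsCompact K → μ K = μ' K := fun K hKc =>
    le_antisymm (aux_compact_le μ μ' hR hKc) (aux_compact_le μ' μ hR' hKc)
  have hO : ∀ U : Set M, IsOpen U → μ U = μ' U := by
    intro U hU
    rw [hU.measure_eq_iSup_isCompact μ, hU.measure_eq_iSup_isCompact μ']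
    exact iSup_congr fun K => iSup_congr fun _ => iSup_congr fun hKc => hK K hKc
  refine Measure.ext fun s hs => ?_
  rw [Set.measure_eq_iInf_isOpen s μ, Set.measure_eq_iInf_isOpen s μ']
  exact iInf_congr fun U => iInf_congr fun _ => iInf_congr fun hU => hO U hU

lemma aux_ae_zero (μ : Measure M) [IsFiniteMeasure μ] [μ.Regular]
    (h : M → ℂ) (hc : Continuous h)
    (hint : ∀ f : M → ℂ, Continuous f → HasCompactSupport f → ∫ x, f x * h x ∂μ = 0) :
    ∀ᵐ x ∂μ, h x = 0 := by
  have hKnull : ∀ K : Set M, IsCompact K → K ⊆ {x | h x ≠ 0} → μ K = 0 := by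
    intro K hKc hKV
    obtain ⟨φ, hφ1, hφ0, hφc, hφ01⟩ :=
      exists_continuous_one_zero_of_isCompact hKc isClosed_empty (Set.disjoint_empty _)
    set f : M → ℂ := fun x => (φ x : ℂ) * starRingEnd ℂ (h x) with hfdef
    have hfcont : Continuous f :=
      (Complex.continuous_ofReal.comp φ.continuous).mul (Complex.continuous_conj.comp hc)
    have hfcs : HasCompactSupport f :=
      ((hφc.comp_left (g := (Complex.ofReal : ℝ → ℂ)) rfl)).mul_right
    have h0 := hint f hfcont hfcs
    set g : M → ℝ := fun x => φ x * Complex.normSq (h x) with hgdef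
    have hfg : ∀ x, f x * h x = ((g x : ℝ) : ℂ) := by
      intro x
      simp only [hfdef, hgdef]
      rw [mul_assoc, ← Complex.normSq_eq_conj_mul_self]
      push_cast
      ring
    have hgcont : Continuous g := φ.continuous.mul (Complex.continuous_normSq.comp hc)
    have hgint : Integrable g μ := hgcont.integrable_of_hasCompactSupport hφc.mul_right
    have hg0 : ∫ x, g x ∂μ = 0 := by
      have hz : ∫ x, ((g x : ℝ) : ℂ) ∂μ = 0 := by
        rw [← h0]
        exact integral_congr_ae (Filter.Eventually.of_forall fun x => (hfg x).symm)
      rw [aux_integral_ofReal hgint] at hz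
      exact_mod_cast hz
    have hgnn : 0 ≤ᵐ[μ] g :=
      Filter.Eventually.of_forall fun x => mul_nonneg (hφ01 x).1 (Complex.normSq_nonneg _)
    have hgz : ∀ᵐ x ∂μ, g x = 0 := by
      have := (integral_eq_zero_iff_of_nonneg_ae hgnn hgint).mp hg0
      filter_upwards [this] with x hx
      simpa using hx
    have hnull : μ {x | ¬ g x = 0} = 0 := ae_iff.mp hgz
    refine measure_mono_null ?_ hnull
    intro x hx
    have hx1 : φ x = 1 := hφ1 hx
    have hx2 : h x ≠ 0 := hKV hx
    simp only [Set.mem_setOf_eq, hgdef, hx1, one_mul]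
    exact fun hcon => hx2 (Complex.normSq_eq_zero.mp hcon)
  have hVopen : IsOpen {x | h x ≠ 0} := isOpen_compl_iff.mpr (isClosed_eq hc continuous_const)
  have hV : μ {x | h x ≠ 0} = 0 := by
    rw [hVopen.measure_eq_iSup_isCompact μ]
    simp only [ENNReal.iSup_eq_zero]
    intro K
    by_cases hKsub : K ⊆ {x | h x ≠ 0}
    · simp only [hKsub, iSup_pos]
      by_cases hKc : IsCompact K
      · simp [hKc, hKnull K hKc hKsub]
      · simp [hKc]
    · simp [hKsub]
  rw [ae_iff]
  exact measure_mono_null (fun x hx => hx) hV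

end MeasAux

/-- Uniqueness of the data of an abstract coherent state quantization
determined by the quantization map: if two weakly overcomplete, WOT-continuous families
of rank-one projections `q, q'` (with respect to finite regular Borel measures `μ, μ'`
on a locally compact Hausdorff space `M`) determine the same quantization map on
compactly supported continuous functions, then `μ = μ'` and `q = q'` `μ`-a.e. -/
theorem quantization_map_determines_coherent_states
    {M : Type*} [TopologicalSpace M] [LocallyCompactSpace M] [T2Space M]
    [MeasurableSpace M] [BorelSpace M]
    (μ μ' : Measure M) [IsFiniteMeasure μ] [IsFiniteMeasure μ'] [μ.Regular] [μ'.Regular]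
    {H : Type*} [NormedAddCommGroup H] [InnerProductSpace ℂ H] [CompleteSpace H]
    [TopologicalSpace.SeparableSpace H]
    (q q' : M → (H →L[ℂ] H))
    (hq_cont : ∀ v w : H, Continuous fun x => ⟪v, q x w⟫_ℂ)
    (hq'_cont : ∀ v w : H, Continuous fun x => ⟪v, q' x w⟫_ℂ)
    (hq_rank1 : ∀ x, ∃ u : H, ‖u‖ = 1 ∧ ∀ v, q x v = ⟪u, v⟫_ℂ • u)
    (hq'_rank1 : ∀ x, ∃ u : H, ‖u‖ = 1 ∧ ∀ v, q' x v = ⟪u, v⟫_ℂ • u)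
    (hq_int : ∀ v w : H, Integrable (fun x => ⟪v, q x w⟫_ℂ) μ)
    (hq_over : ∀ v w : H, ∫ x, ⟪v, q x w⟫_ℂ ∂μ = ⟪v, w⟫_ℂ)
    (hq'_int : ∀ v w : H, Integrable (fun x => ⟪v, q' x w⟫_ℂ) μ')
    (hq'_over : ∀ v w : H, ∫ x, ⟪v, q' x w⟫_ℂ ∂μ' = ⟪v, w⟫_ℂ)
    (hQ : ∀ f : M → ℂ, Continuous f → HasCompactSupport f → ∀ v w : H,
      ∫ x, f x * ⟪v, q x w⟫_ℂ ∂μ = ∫ x, f x * ⟪v, q' x w⟫_ℂ ∂μ') :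
    μ = μ' ∧ ∀ᵐ x ∂μ, q x = q' x := by
  classical
  obtain ⟨w, b, hb⟩ := exists_hilbertBasis ℂ H
  haveI : Countable w := by
    have hon : Orthonormal ℂ (⇑b) := b.orthonormal
    refine Pairwise.countable_of_isOpen_disjoint
      (s := fun i : w => Metric.ball (b i) (1 / 2)) ?_ (fun _ => Metric.isOpen_ball)
      (fun i => Metric.nonempty_ball.2 (by norm_num))
    intro i j hij
    refine Metric.ball_disjoint_ball ?_
    have hdist : dist (b i) (b j) ^ 2 = 2 := by
      rw [dist_eq_norm, @norm_sub_sq ℂ]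
      simp [hon.1 i, hon.1 j, hon.2 hij]
      norm_num
    nlinarith [dist_nonneg (x := b i) (y := b j)]
  -- Step 1: equality of integrals of compactly supported functions
  have key : ∀ f : M → ℂ, Continuous f → HasCompactSupport f →
      ∫ x, f x ∂μ = ∫ x, f x ∂μ' := by
    intro f hf hfc
    have h1 := aux_hasSum_integral b μ q hq_cont hq_rank1 f hf hfc
    have h2 := aux_hasSum_integral b μ' q' hq'_cont hq'_rank1 f hf hfc
    have heq : (fun i : w => ∫ x, f x * ⟪b i, q x (b i)⟫_ℂ ∂μ) =
        fun i : w => ∫ x, f x * ⟪b i, q' x (b i)⟫_ℂ ∂μ' :=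
      funext fun i => hQ f hf hfc (b i) (b i)
    exact h1.unique (heq ▸ h2)
  have hμ : μ = μ' := aux_measure_ext μ μ' key
  refine ⟨hμ, ?_⟩
  -- Step 2: a.e. equality of the projections
  have hae : ∀ i j : w, ∀ᵐ x ∂μ, ⟪b i, q x (b j)⟫_ℂ = ⟪b i, q' x (b j)⟫_ℂ := by
    intro i j
    have hz := aux_ae_zero μ (fun x => ⟪b i, q x (b j)⟫_ℂ - ⟪b i, q' x (b j)⟫_ℂ)
      ((hq_cont _ _).sub (hq'_cont _ _)) ?_
    · filter_upwards [hz] with x hx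
      exact sub_eq_zero.mp hx
    · intro f hf hfc
      have int1 : Integrable (fun x => f x * ⟪b i, q x (b j)⟫_ℂ) μ :=
        (hf.mul (hq_cont _ _)).integrable_of_hasCompactSupport hfc.mul_right
      have int2 : Integrable (fun x => f x * ⟪b i, q' x (b j)⟫_ℂ) μ :=
        (hf.mul (hq'_cont _ _)).integrable_of_hasCompactSupport hfc.mul_right
      have e1 := hQ f hf hfc (b i) (b j)
      rw [← hμ] at e1
      have hsplit : (fun x => f x * (⟪b i, q x (b j)⟫_ℂ - ⟪b i, q' x (b j)⟫_ℂ)) =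
          fun x => f x * ⟪b i, q x (b j)⟫_ℂ - f x * ⟪b i, q' x (b j)⟫_ℂ := by
        funext x; ring
      rw [hsplit, integral_sub int1 int2, e1, sub_self]
  have hall : ∀ᵐ x ∂μ, ∀ i j : w, ⟪b i, q x (b j)⟫_ℂ = ⟪b i, q' x (b j)⟫_ℂ := by
    rw [ae_all_iff]
    intro i
    rw [ae_all_iff]
    exact hae i
  filter_upwards [hall] with x hx
  have hdense : Dense (Submodule.span ℂ (Set.range ⇑b) : Set H) := by
    rw [Submodule.dense_iff_topologicalClosure_eq_top]
    exact b.dense_span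
  refine ContinuousLinearMap.ext_on hdense ?_
  rintro v ⟨j, rfl⟩
  have hy : q x (b j) - q' x (b j) = 0 := by
    rw [← (b.repr.map_eq_zero_iff)]
    ext i
    rw [b.repr_apply_apply, inner_sub_right, hx i j, sub_self]
    simp
  exact sub_eq_zero.mp hy
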